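/- Let r ≥ 2 be a real number and let ψ : ℝ → ℝ be continuously differentiable. Define the piecewise-linear cutoff φ_r : [0, r] → ℝ by φ_r(t) = t for t ∈ [0,1], φ_r(t) = 1 for t ∈ [1, r−1], and φ_r(t) = r − t for t ∈ [r−1, r]. Then ∫_{0}^{r} φ_r(t)²·ψ'(t) dt ≤ sup_{t ∈ [0,1]} |ψ(t)| + sup_{t ∈ [r−1,r]} ψ(t). -/

import Mathlib

open Set MeasureTheory intervalIntegral

/-- Integration-by-parts estimate (inequality (5.3)) in the proof of Proposition 5.1,
with the standard trapezoidal cutoff. -/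
theorem stmt_3 (r : ℝ) (hr : 2 ≤ r) (ψ : ℝ → ℝ) (hψ : ContDiff ℝ 1 ψ) :
    (∫ t in (0:ℝ)..r,
        (if t ≤ 1 then t else if t ≤ r - 1 then 1 else r - t) ^ 2 * deriv ψ t)
      ≤ sSup ((fun t => |ψ t|) '' Icc (0:ℝ) 1) + sSup (ψ '' Icc (r - 1) r) := by
  have hψc : Continuous ψ := hψ.continuous
  have hψ'c : Continuous (deriv ψ) := hψ.continuous_deriv le_rfl
  have hd : ∀ x : ℝ, HasDerivAt ψ (deriv ψ x) x :=
    fun x => ((hψ.differentiable one_ne_zero) x).hasDerivAt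
  have h1r : (1:ℝ) ≤ r - 1 := by linarith
  have hrr : r - 1 ≤ r := by linarith
  set F : ℝ → ℝ := fun t =>
    (if t ≤ 1 then t else if t ≤ r - 1 then 1 else r - t) ^ 2 * deriv ψ t with hF
  -- EqOn identities on the three subintervals
  have e1 : EqOn F (fun t => t ^ 2 * deriv ψ t) (uIcc (0:ℝ) 1) := by
    intro t ht
    rw [uIcc_of_le (by norm_num : (0:ℝ) ≤ 1)] at ht
    simp [hF, ht.2]
  have e2 : EqOn F (fun t => deriv ψ t) (uIcc (1:ℝ) (r-1)) := by
    intro t ht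
    rw [uIcc_of_le h1r] at ht
    by_cases h : t ≤ 1
    · have ht1 : t = 1 := le_antisymm h ht.1
      simp [hF, h, ht1]
    · simp [hF, h, ht.2]
  have e3 : EqOn F (fun t => (r - t) ^ 2 * deriv ψ t) (uIcc (r-1) r) := by
    intro t ht
    rw [uIcc_of_le hrr] at ht
    show (if t ≤ 1 then t else if t ≤ r - 1 then 1 else r - t) ^ 2 * deriv ψ t
        = (r - t) ^ 2 * deriv ψ t
    by_cases h : t ≤ 1
    · have ht1 : t = 1 := le_antisymm h (le_trans h1r ht.1)
      have h' : r - 1 ≤ 1 := ht1 ▸ ht.1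
      have hr2 : r = 2 := by linarith
      rw [if_pos h, ht1, hr2]
      norm_num
    · by_cases h2 : t ≤ r - 1
      · have ht2 : t = r - 1 := le_antisymm h2 ht.1
        have hb : r - (r - 1) = 1 := by ring
        rw [if_neg h, if_pos h2, ht2, hb]
      · rw [if_neg h, if_neg h2]
  -- continuity / integrability of F on each piece
  have c1 : ContinuousOn F (uIcc (0:ℝ) 1) :=
    (((continuous_id.pow 2).mul hψ'c).continuousOn).congr e1
  have c2 : ContinuousOn F (uIcc (1:ℝ) (r-1)) := (hψ'c.continuousOn).congr e2
  have c3 : ContinuousOn F (uIcc (r-1) r) :=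
    ((((continuous_const.sub continuous_id).pow 2).mul hψ'c).continuousOn).congr e3
  have i1 : IntervalIntegrable F volume 0 1 := c1.intervalIntegrable
  have i2 : IntervalIntegrable F volume 1 (r-1) := c2.intervalIntegrable
  have i3 : IntervalIntegrable F volume (r-1) r := c3.intervalIntegrable
  have split : (∫ t in (0:ℝ)..r, F t)
      = (∫ t in (0:ℝ)..1, F t) + (∫ t in (1:ℝ)..(r-1), F t) + (∫ t in (r-1)..r, F t) := by
    rw [← integral_add_adjacent_intervals i1 (i2.trans i3),
        ← integral_add_adjacent_intervals i2 i3, add_assoc]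
  -- piece 1: IBP on [0,1]
  have p1 : (∫ t in (0:ℝ)..1, F t)
      = ψ 1 - ∫ t in (0:ℝ)..1, (2*t) * ψ t := by
    rw [integral_congr e1]
    have := integral_mul_deriv_eq_deriv_mul
      (u := fun t : ℝ => t ^ 2) (u' := fun t : ℝ => 2 * t) (v := ψ) (v' := deriv ψ)
      (a := (0:ℝ)) (b := 1)
      (fun x _ => by simpa using hasDerivAt_pow 2 x)
      (fun x _ => hd x)
      ((continuous_const.mul continuous_id).intervalIntegrable 0 1)
      (hψ'c.intervalIntegrable 0 1)
    simpa using this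
  -- piece 2: FTC on [1, r-1]
  have p2 : (∫ t in (1:ℝ)..(r-1), F t) = ψ (r-1) - ψ 1 := by
    rw [integral_congr e2]
    exact integral_deriv_eq_sub (fun x _ => (hψ.differentiable one_ne_zero) x)
      (hψ'c.intervalIntegrable 1 (r-1))
  -- piece 3: IBP on [r-1, r]
  have p3 : (∫ t in (r-1)..r, F t)
      = -ψ (r-1) + ∫ t in (r-1)..r, (2*(r-t)) * ψ t := by
    rw [integral_congr e3]
    have key := integral_mul_deriv_eq_deriv_mul
      (u := fun t : ℝ => (r - t) ^ 2) (u' := fun t : ℝ => -(2 * (r - t))) (v := ψ)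
      (v' := deriv ψ) (a := r - 1) (b := r)
      (fun x _ => by
        have h := ((hasDerivAt_id x).const_sub r).pow 2
        exact h.congr_deriv (by simp only [id_eq]; ring))
      (fun x _ => hd x)
      ((continuous_const.mul (continuous_const.sub continuous_id)).neg.intervalIntegrable _ _)
      (hψ'c.intervalIntegrable _ _)
    rw [key]
    have hneg : (∫ t in (r-1)..r, -(2*(r-t)) * ψ t)
        = -∫ t in (r-1)..r, (2*(r-t)) * ψ t := by
      rw [← intervalIntegral.integral_neg]
      congr 1; funext t; ring
    rw [hneg, sub_neg_eq_add]
    have hb1 : r - r = 0 := sub_self r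
    have hb2 : r - (r - 1) = 1 := by ring
    simp only [hb1, hb2]
    ring
  -- suprema bounds
  set A := sSup ((fun t => |ψ t|) '' Icc (0:ℝ) 1) with hA
  set B := sSup (ψ '' Icc (r - 1) r) with hB
  have hAbdd : BddAbove ((fun t => |ψ t|) '' Icc (0:ℝ) 1) :=
    (isCompact_Icc.image_of_continuousOn (hψc.abs.continuousOn)).bddAbove
  have hBbdd : BddAbove (ψ '' Icc (r - 1) r) :=
    (isCompact_Icc.image_of_continuousOn hψc.continuousOn).bddAbove
  have hAle : ∀ t ∈ Icc (0:ℝ) 1, -A ≤ ψ t := by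
    intro t ht
    have h1 : |ψ t| ≤ A := le_csSup hAbdd ⟨t, ht, rfl⟩
    have := neg_abs_le (ψ t)
    linarith
  have hBle : ∀ t ∈ Icc (r-1) r, ψ t ≤ B := fun t ht => le_csSup hBbdd ⟨t, ht, rfl⟩
  -- lower bound for ∫₀¹ 2t ψ
  have cA : (∫ t in (0:ℝ)..1, (2*t) * (-A)) = -A := by
    rw [intervalIntegral.integral_mul_const, intervalIntegral.integral_const_mul, integral_id]
    norm_num
  have bound1 : -A ≤ ∫ t in (0:ℝ)..1, (2*t) * ψ t := by
    rw [← cA]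
    apply integral_mono_on (by norm_num)
      (((continuous_const.mul continuous_id).mul continuous_const).intervalIntegrable _ _)
      (((continuous_const.mul continuous_id).mul hψc).intervalIntegrable _ _)
    intro t ht
    have h0 : (0:ℝ) ≤ 2 * t := by linarith [ht.1]
    exact mul_le_mul_of_nonneg_left (hAle t ht) h0
  -- upper bound for ∫_{r-1}^r 2(r-t) ψ
  have cB : (∫ t in (r-1)..r, (2*(r-t)) * B) = B := by
    rw [intervalIntegral.integral_mul_const]
    have hc : (∫ t in (r-1)..r, 2*(r-t)) = ∫ x in (r-r)..(r-(r-1)), 2*x :=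
      integral_comp_sub_left (fun x => 2*x) r
    have hb1 : r - r = 0 := sub_self r
    have hb2 : r - (r - 1) = 1 := by ring
    rw [hc, hb1, hb2, intervalIntegral.integral_const_mul, integral_id]
    norm_num
  have bound2 : (∫ t in (r-1)..r, (2*(r-t)) * ψ t) ≤ B := by
    rw [← cB]
    apply integral_mono_on hrr
      (((continuous_const.mul (continuous_const.sub continuous_id)).mul hψc).intervalIntegrable _ _)
      (((continuous_const.mul (continuous_const.sub continuous_id)).mul continuous_const).intervalIntegrable _ _)
    intro t ht
    have h0 : (0:ℝ) ≤ 2 * (r - t) := by linarith [ht.2]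
    exact mul_le_mul_of_nonneg_left (hBle t ht) h0
  calc (∫ t in (0:ℝ)..r, F t)
      = (∫ t in (r-1)..r, (2*(r-t)) * ψ t) - ∫ t in (0:ℝ)..1, (2*t) * ψ t := by
        rw [split, p1, p2, p3]; ring
    _ ≤ A + B := by linarith
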